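/- For all integers n, d with n ≥ d/2 ≥ 0 and all t > 0, one has log(I_n(t)/I_{n-d}(t)) ≥ (1 + d)(d - 2n)/(2t). -/

import Mathlib

/-- Modified Bessel function of the first kind of integer order `m` (with the
convention `I_{-m} = I_m`), via its power series. -/
noncomputable def besselI (m : ℤ) (t : ℝ) : ℝ :=
  ∑' k : ℕ, (t / 2) ^ (2 * k + m.natAbs) / ((k.factorial : ℝ) * ((k + m.natAbs).factorial : ℝ))

namespace BesselProof

open Real Finset

noncomputable def a (ν : ℕ) (t : ℝ) (k : ℕ) : ℝ :=
  (t / 2) ^ (2 * k + ν) / ((k.factorial : ℝ) * ((k + ν).factorial : ℝ))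

noncomputable def J (ν : ℕ) (t : ℝ) : ℝ := ∑' k, a ν t k

lemma besselI_eq (m : ℤ) (t : ℝ) : besselI m t = J m.natAbs t := rfl

variable {t : ℝ}

lemma a_pos (ht : 0 < t) (ν k : ℕ) : 0 < a ν t k := by
  apply div_pos (pow_pos (by linarith) _)
  positivity

lemma summable_a (ht : 0 < t) (ν : ℕ) : Summable (a ν t) := by
  have h2 : (0:ℝ) < t / 2 := by linarith
  have hg : Summable (fun k : ℕ => (t/2)^ν * (((t/2)^2)^k / k.factorial)) :=
    (Real.summable_pow_div_factorial ((t/2)^2)).mul_left _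
  refine Summable.of_nonneg_of_le (fun k => (a_pos ht ν k).le) (fun k => ?_) hg
  have h1 : a ν t k ≤ (t/2)^(2*k+ν) / (k.factorial : ℝ) := by
    unfold a
    apply div_le_div_of_nonneg_left (by positivity) (by positivity)
    have h3 : (1:ℝ) ≤ ((k+ν).factorial : ℝ) := by exact_mod_cast (k+ν).factorial_pos
    have h4 : (0:ℝ) < (k.factorial : ℝ) := by exact_mod_cast k.factorial_pos
    nlinarith
  refine h1.trans (le_of_eq ?_)
  rw [pow_add, pow_mul]
  ring

lemma J_pos (ht : 0 < t) (ν : ℕ) : 0 < J ν t :=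
  Summable.tsum_pos (summable_a ht ν) (fun k => (a_pos ht ν k).le) 0 (a_pos ht ν 0)

lemma a_split (ht : 0 < t) (ν k : ℕ) :
    a ν t k = (2*((ν:ℝ)+1)/t) * a (ν+1) t k +
      (if k = 0 then 0 else a (ν+2) t (k-1)) := by
  have ht' : t ≠ 0 := ne_of_gt ht
  match k with
  | 0 =>
    simp only [if_pos rfl, add_zero]
    unfold a
    have h1 : 2*0+(ν+1) = (2*0+ν)+1 := by ring
    rw [h1, pow_succ]
    simp only [Nat.factorial_zero, Nat.zero_add, Nat.cast_one, one_mul, zero_add]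
    rw [Nat.factorial_succ]
    push_cast
    field_simp
    ring
  | (j+1) =>
    simp only [if_neg (Nat.succ_ne_zero j), Nat.add_sub_cancel]
    unfold a
    have e1 : 2*(j+1)+ν = (2*j+(ν+2)) := by ring
    have e2 : 2*(j+1)+(ν+1) = (2*j+(ν+2))+1 := by ring
    have e3 : j+1+(ν+1) = (j + (ν+2)) := by ring
    have e4 : j+1+ν = (j+(ν+1)) := by ring
    have e5 : j + (ν+2) = (j+(ν+1))+1 := by ring
    rw [e1, e2, e3, e4, pow_succ, Nat.factorial_succ j, e5, Nat.factorial_succ (j+(ν+1))]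
    push_cast
    have hf1 : ((j.factorial : ℝ)) ≠ 0 := by exact_mod_cast j.factorial_ne_zero
    have hf2 : (((j+(ν+1)).factorial : ℝ)) ≠ 0 := by exact_mod_cast (j+(ν+1)).factorial_ne_zero
    field_simp
    ring

lemma recurrence (ht : 0 < t) (ν : ℕ) :
    J ν t = J (ν+2) t + (2*((ν:ℝ)+1)/t) * J (ν+1) t := by
  have hg : Summable (fun k => (2*((ν:ℝ)+1)/t) * a (ν+1) t k) :=
    (summable_a ht (ν+1)).mul_left _
  have hh : Summable (fun k => if k = 0 then (0:ℝ) else a (ν+2) t (k-1)) := by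
    have : (fun k => if k = 0 then (0:ℝ) else a (ν+2) t (k-1))
        = fun k => a ν t k - (2*((ν:ℝ)+1)/t) * a (ν+1) t k := by
      funext k; rw [a_split ht ν k]; ring
    rw [this]
    exact (summable_a ht ν).sub hg
  have h1 : J ν t = ∑' k, ((2*((ν:ℝ)+1)/t) * a (ν+1) t k +
      (if k = 0 then 0 else a (ν+2) t (k-1))) := by
    unfold J; exact tsum_congr (a_split ht ν)
  rw [h1, Summable.tsum_add hg hh, tsum_mul_left, Summable.tsum_eq_zero_add hh]
  rw [show (∑' b : ℕ, if b + 1 = 0 then (0:ℝ) else a (ν+2) t (b+1-1)) = J (ν+2) t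
    from tsum_congr fun b => by simp]
  rw [show (∑' k, a (ν+1) t k) = J (ν+1) t from rfl]
  simp only [ite_true, zero_add]
  ring

lemma a_sq_le (ht : 0 < t) (ν k : ℕ) :
    a (ν+1) t k ^ 2 ≤ a ν t k * a ν t (k+1) := by
  unfold a
  rw [div_pow, ← pow_mul, div_mul_div_comm, ← pow_add]
  have e1 : (2*k+(ν+1))*2 = (2*k+ν) + (2*(k+1)+ν) := by ring
  rw [e1]
  apply div_le_div_of_nonneg_left (by positivity) (by positivity)
  have hnat : (k.factorial * (k+ν).factorial) * ((k+1).factorial * (k+1+ν).factorial)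
      ≤ (k.factorial * (k+(ν+1)).factorial) * (k.factorial * (k+(ν+1)).factorial) := by
    have e2 : k+(ν+1) = (k+ν)+1 := by ring
    have e3 : k+1+ν = (k+ν)+1 := by ring
    rw [e2, e3, Nat.factorial_succ (k+ν), Nat.factorial_succ k]
    have h4 : k + 1 ≤ k + ν + 1 := by omega
    calc k.factorial * (k+ν).factorial * ((k+1) * k.factorial * ((k+ν+1) * (k+ν).factorial))
        = (k+1) * (k.factorial * (k+ν).factorial * (k.factorial * ((k+ν+1) * (k+ν).factorial))) := by ring
      _ ≤ (k+ν+1) * (k.factorial * (k+ν).factorial * (k.factorial * ((k+ν+1) * (k+ν).factorial))) :=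
          Nat.mul_le_mul_right _ h4
      _ = k.factorial * ((k+ν+1) * (k+ν).factorial) * (k.factorial * ((k+ν+1) * (k+ν).factorial)) := by ring
  calc ((k.factorial : ℝ) * ((k+(ν+1)).factorial : ℝ)) ^ 2
      = ((k.factorial * (k+(ν+1)).factorial : ℕ) : ℝ) * ((k.factorial * (k+(ν+1)).factorial : ℕ) : ℝ) := by
        push_cast; ring
    _ ≥ (((k.factorial * (k+ν).factorial) * ((k+1).factorial * (k+1+ν).factorial) : ℕ) : ℝ) := by
        exact_mod_cast hnat
    _ = (k.factorial : ℝ) * ((k+ν).factorial : ℝ) * ((k+1).factorial * ((k+1+ν).factorial : ℝ)) := by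
        push_cast; ring

lemma a_le_avg (ht : 0 < t) (ν k : ℕ) :
    a (ν+1) t k ≤ (a ν t k + a ν t (k+1)) / 2 := by
  have hb := (a_pos ht (ν+1) k).le
  have hx := (a_pos ht ν k).le
  have hy := (a_pos ht ν (k+1)).le
  have hsq := a_sq_le ht ν k
  nlinarith [sq_nonneg (a ν t k - a ν t (k+1)), sq_nonneg (a ν t k + a ν t (k+1) - 2 * a (ν+1) t k)]

lemma J_anti (ht : 0 < t) (ν : ℕ) : J (ν+1) t ≤ J ν t := by
  have hs := summable_a ht ν
  have hs1 : Summable (fun k => a ν t (k+1)) := (summable_nat_add_iff 1).mpr hs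
  have hsum : Summable (fun k => (a ν t k + a ν t (k+1))/2) := (hs.add hs1).div_const 2
  have h1 : J (ν+1) t ≤ ∑' k, (a ν t k + a ν t (k+1))/2 :=
    Summable.tsum_le_tsum (a_le_avg ht ν) (summable_a ht (ν+1)) hsum
  have h2 : ∑' k, (a ν t k + a ν t (k+1))/2 = (J ν t + ∑' k, a ν t (k+1))/2 := by
    rw [tsum_div_const, Summable.tsum_add hs hs1]; rfl
  have h3 : J ν t = a ν t 0 + ∑' k, a ν t (k+1) := Summable.tsum_eq_zero_add hs
  have h0 := (a_pos ht ν 0).le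
  rw [h2] at h1
  linarith
/-- collapsed Vandermonde sum -/
lemma vand (K M q : ℕ) (h : K ≤ q) :
    ∑ j ∈ range (K+1), K.choose j * M.choose (q - j) = (K+M).choose q := by
  rw [Nat.add_choose_eq, Finset.Nat.sum_antidiagonal_eq_sum_range_succ_mk]
  apply Finset.sum_subset
  · exact Finset.range_subset_range.mpr (by omega)
  · intro j hj hj'
    simp only [Finset.mem_range] at hj hj'
    have : K < j := by omega
    simp [Nat.choose_eq_zero_of_lt this]

lemma natsum_le (K ν : ℕ) :
    ∑ j ∈ range (K+1), K.choose j * (K+2*ν+2).choose (j+ν)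
      ≤ ∑ j ∈ range (K+1), K.choose j * (K+2*ν+2).choose (j+ν+1) := by
  set M := K + 2*ν + 2 with hM
  have h1 : ∀ j ∈ range (K+1), K.choose j * M.choose (j+ν)
      = K.choose j * M.choose ((K+ν+2) - j) := by
    intro j hj
    simp only [Finset.mem_range] at hj
    congr 1
    rw [← Nat.choose_symm (by omega : j + ν ≤ M)]
    congr 1
    omega
  have h2 : ∀ j ∈ range (K+1), K.choose j * M.choose (j+ν+1)
      = K.choose j * M.choose ((K+ν+1) - j) := by
    intro j hj
    simp only [Finset.mem_range] at hj
    congr 1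
    rw [← Nat.choose_symm (by omega : j + ν + 1 ≤ M)]
    congr 1
    omega
  rw [Finset.sum_congr rfl h1, Finset.sum_congr rfl h2,
    vand K M (K+ν+2) (by omega), vand K M (K+ν+1) (by omega)]
  have e1 : K + M = 2 * (K+ν+1) := by omega
  rw [e1]
  have e2 : K+ν+1 = (2*(K+ν+1))/2 := by omega
  calc (2*(K+ν+1)).choose (K+ν+2) ≤ (2*(K+ν+1)).choose ((2*(K+ν+1))/2) :=
        Nat.choose_le_middle _ _
    _ = (2*(K+ν+1)).choose (K+ν+1) := by rw [← e2]

/-- per-term identity over ℝ -/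
lemma term_eq (K ν j k μ : ℕ) (hjk : j + k = K) (hμ : μ ≤ 2*ν+2) :
    (1:ℝ)/(j.factorial * (j+μ).factorial * (k.factorial * (k+(2*ν+2-μ)).factorial))
      = (K.choose j * (K+2*ν+2).choose (j+μ) : ℕ) /
        (K.factorial * (K+2*ν+2).factorial) := by
  have hj : j ≤ K := by omega
  set M := K + 2*ν+2 with hM
  have hjμ : j + μ ≤ M := by omega
  have h1 : (K.choose j : ℝ) * j.factorial * k.factorial = K.factorial := by
    have := Nat.choose_mul_factorial_mul_factorial hj
    have e : K - j = k := by omega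
    rw [e] at this
    exact_mod_cast this
  have h2 : (M.choose (j+μ) : ℝ) * (j+μ).factorial * (k+(2*ν+2-μ)).factorial = M.factorial := by
    have := Nat.choose_mul_factorial_mul_factorial hjμ
    have e : M - (j+μ) = k+(2*ν+2-μ) := by omega
    rw [e] at this
    exact_mod_cast this
  have hf1 : (j.factorial : ℝ) ≠ 0 := by exact_mod_cast j.factorial_ne_zero
  have hf2 : ((j+μ).factorial : ℝ) ≠ 0 := by exact_mod_cast (j+μ).factorial_ne_zero
  have hf3 : (k.factorial : ℝ) ≠ 0 := by exact_mod_cast k.factorial_ne_zero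
  have hf4 : ((k+(2*ν+2-μ)).factorial : ℝ) ≠ 0 := by exact_mod_cast (k+(2*ν+2-μ)).factorial_ne_zero
  have hf5 : (K.factorial : ℝ) ≠ 0 := by exact_mod_cast K.factorial_ne_zero
  have hf6 : (M.factorial : ℝ) ≠ 0 := by exact_mod_cast M.factorial_ne_zero
  push_cast
  rw [div_eq_div_iff (by positivity) (by positivity)]
  nlinarith [h1, h2]

lemma coeff_le (K ν : ℕ) :
    ∑ p ∈ Finset.HasAntidiagonal.antidiagonal K, (1:ℝ)/(p.1.factorial * (p.1+ν).factorial *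
        (p.2.factorial * (p.2+(ν+2)).factorial))
      ≤ ∑ p ∈ Finset.HasAntidiagonal.antidiagonal K, (1:ℝ)/(p.1.factorial * (p.1+(ν+1)).factorial *
        (p.2.factorial * (p.2+(ν+1)).factorial)) := by
  have hL : ∀ p ∈ Finset.HasAntidiagonal.antidiagonal K,
      (1:ℝ)/(p.1.factorial * (p.1+ν).factorial * (p.2.factorial * (p.2+(ν+2)).factorial))
      = (K.choose p.1 * (K+2*ν+2).choose (p.1+ν) : ℕ) / (K.factorial * (K+2*ν+2).factorial) := by
    intro p hp
    rw [Finset.HasAntidiagonal.mem_antidiagonal] at hp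
    have := term_eq K ν p.1 p.2 ν hp (by omega)
    have e : 2*ν+2-ν = ν+2 := by omega
    rw [e] at this
    exact this
  have hR : ∀ p ∈ Finset.HasAntidiagonal.antidiagonal K,
      (1:ℝ)/(p.1.factorial * (p.1+(ν+1)).factorial * (p.2.factorial * (p.2+(ν+1)).factorial))
      = (K.choose p.1 * (K+2*ν+2).choose (p.1+ν+1) : ℕ) / (K.factorial * (K+2*ν+2).factorial) := by
    intro p hp
    rw [Finset.HasAntidiagonal.mem_antidiagonal] at hp
    have := term_eq K ν p.1 p.2 (ν+1) hp (by omega)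
    have e : 2*ν+2-(ν+1) = ν+1 := by omega
    have e2 : p.1+(ν+1) = p.1+ν+1 := by omega
    rw [e, e2] at this
    exact this
  rw [Finset.sum_congr rfl hL, Finset.sum_congr rfl hR, ← Finset.sum_div, ← Finset.sum_div]
  have hD : (0:ℝ) < (K.factorial : ℝ) * ((K+2*ν+2).factorial : ℝ) := by positivity
  rw [div_le_div_iff_of_pos_right hD]
  rw [Finset.Nat.sum_antidiagonal_eq_sum_range_succ_mk,
    Finset.Nat.sum_antidiagonal_eq_sum_range_succ_mk]
  exact_mod_cast natsum_le K ν
lemma summable_norm_a (ht : 0 < t) (ν : ℕ) : Summable fun k => ‖a ν t k‖ := by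
  simpa only [Real.norm_eq_abs] using (summable_a ht ν).abs

lemma term_prod (ht : 0 < t) (μ μ' K : ℕ) (hK : ∀ p ∈ Finset.HasAntidiagonal.antidiagonal K, True) :
    ∀ p ∈ Finset.HasAntidiagonal.antidiagonal K,
      a μ t p.1 * a μ' t p.2 = (t/2)^(2*K+(μ+μ')) *
        ((1:ℝ)/(p.1.factorial * (p.1+μ).factorial * (p.2.factorial * (p.2+μ').factorial))) := by
  intro p hp
  rw [Finset.HasAntidiagonal.mem_antidiagonal] at hp
  unfold a
  rw [div_mul_div_comm, ← pow_add]
  have e : 2*p.1+μ + (2*p.2+μ') = 2*K+(μ+μ') := by omega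
  rw [e]
  ring

lemma cauchy (ht : 0 < t) (μ μ' : ℕ) :
    J μ t * J μ' t = ∑' K, ∑ p ∈ Finset.HasAntidiagonal.antidiagonal K, a μ t p.1 * a μ' t p.2 :=
  tsum_mul_tsum_eq_tsum_sum_antidiagonal_of_summable_norm
    (summable_norm_a ht μ) (summable_norm_a ht μ')

lemma summable_cauchy (ht : 0 < t) (μ μ' : ℕ) :
    Summable fun K => ∑ p ∈ Finset.HasAntidiagonal.antidiagonal K, a μ t p.1 * a μ' t p.2 :=
  summable_sum_mul_antidiagonal_of_summable_norm' (summable_norm_a ht μ) (summable_a ht μ)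
    (summable_norm_a ht μ') (summable_a ht μ')

lemma turan (ht : 0 < t) (ν : ℕ) : J ν t * J (ν+2) t ≤ J (ν+1) t ^ 2 := by
  rw [sq, cauchy ht ν (ν+2), cauchy ht (ν+1) (ν+1)]
  apply Summable.tsum_le_tsum _ (summable_cauchy ht ν (ν+2)) (summable_cauchy ht (ν+1) (ν+1))
  intro K
  rw [Finset.sum_congr rfl (term_prod ht ν (ν+2) K (fun _ _ => trivial)),
    Finset.sum_congr rfl (term_prod ht (ν+1) (ν+1) K (fun _ _ => trivial)),
    ← Finset.mul_sum, ← Finset.mul_sum]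
  have e : (ν+1)+(ν+1) = ν+(ν+2) := by omega
  rw [e]
  apply mul_le_mul_of_nonneg_left _ (by positivity)
  exact coeff_le K ν
lemma exp_key {x : ℝ} (hx : 0 ≤ x) : Real.exp (-x)^2 + 2*x*Real.exp (-x) ≤ 1 := by
  have hq : 1 + x + x^2/2 ≤ Real.exp x := by
    have h := Real.sum_le_exp_of_nonneg hx 3
    simp [Finset.sum_range_succ] at h
    linarith
  set E := Real.exp x with hE
  have hEpos : 0 < E := Real.exp_pos x
  have h3 : 0 ≤ E - x := by nlinarith
  have h4 : (1 + x^2/2)^2 ≤ (E - x)^2 := by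
    apply pow_le_pow_left₀ (by positivity) (by linarith)
  have h5 : 1 + 2*x*E ≤ E^2 := by nlinarith
  have h6 : Real.exp (-x) = E⁻¹ := by rw [Real.exp_neg]
  rw [h6]
  have h7 : (E⁻¹)^2 + 2*x*E⁻¹ = (1 + 2*x*E)/E^2 := by field_simp
  rw [h7, div_le_one (by positivity)]
  exact h5

lemma step (ht : 0 < t) (ν : ℕ) :
    Real.exp (-((ν:ℝ)+1)/t) * J ν t ≤ J (ν+1) t := by
  rw [neg_div]
  set A := J ν t with hA
  set B := J (ν+1) t with hB
  set C := J (ν+2) t with hC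
  set x := ((ν:ℝ)+1)/t with hx
  have hxpos : 0 < x := by positivity
  have hApos : 0 < A := J_pos ht ν
  have hBpos : 0 < B := J_pos ht (ν+1)
  have hCpos : 0 < C := J_pos ht (ν+2)
  have hrec : A = C + 2*x*B := by
    rw [hA, recurrence ht ν, hx]; ring
  have htu : A * C ≤ B^2 := turan ht ν
  have h1 : A^2 ≤ B^2 + 2*x*A*B := by nlinarith
  set E := Real.exp (-x) with hE
  have hEpos : 0 < E := Real.exp_pos _
  have h2 : E^2 + 2*x*E ≤ 1 := exp_key hxpos.le
  have h2A : (E^2 + 2*x*E)*A^2 ≤ A^2 := by nlinarith [sq_nonneg A]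
  have key : 0 ≤ (B - E*A)*(B + E*A + 2*x*A) := by nlinarith
  have hfac : 0 < B + E*A + 2*x*A := by positivity
  by_contra hc
  push_neg at hc
  have hneg : (B - E*A)*(B + E*A + 2*x*A) < 0 :=
    mul_neg_of_neg_of_pos (by linarith) hfac
  linarith
lemma chain (ht : 0 < t) (M : ℕ) : ∀ c : ℕ,
    Real.exp (-((((M:ℝ)+c)*(((M:ℝ)+c)+1) - (M:ℝ)*((M:ℝ)+1))/(2*t))) * J M t ≤ J (M+c) t := by
  intro c
  induction c with
  | zero => simp
  | succ c ih =>
    have hstep := step ht (M+c)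
    push_cast at hstep
    have hmul := mul_le_mul_of_nonneg_left ih (Real.exp_nonneg (-(((M:ℝ)+c)+1)/t))
    have ht' : t ≠ 0 := ne_of_gt ht
    have he : -((((M:ℝ)+((c:ℝ)+1))*(((M:ℝ)+((c:ℝ)+1))+1) - (M:ℝ)*((M:ℝ)+1))/(2*t))
        = -(((M:ℝ)+c)+1)/t + -((((M:ℝ)+c)*(((M:ℝ)+c)+1) - (M:ℝ)*((M:ℝ)+1))/(2*t)) := by
      field_simp
      ring
    push_cast
    rw [he, Real.exp_add, mul_assoc]
    exact hmul.trans hstep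

end BesselProof

open BesselProof in
theorem log_besselI_ratio_lower_bound (n d : ℤ) (hd : 0 ≤ d) (hnd : d ≤ 2 * n)
    (t : ℝ) (ht : 0 < t) :
    (1 + (d : ℝ)) * ((d : ℝ) - 2 * (n : ℝ)) / (2 * t)
      ≤ Real.log (besselI n t / besselI (n - d) t) := by
  have hn : 0 ≤ n := by omega
  set N := n.natAbs with hN
  set M := (n - d).natAbs with hM
  have hNZ : (N : ℤ) = n := Int.natAbs_of_nonneg hn
  have hMabs : ((M : ℤ)) = |n - d| := (Int.abs_eq_natAbs _).symm
  have hMNZ : (M : ℤ) ≤ (N : ℤ) := by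
    rw [hMabs, hNZ]
    exact abs_le.mpr ⟨by omega, by omega⟩
  have hMN : M ≤ N := by exact_mod_cast hMNZ
  have hJM := J_pos ht M
  have hJN := J_pos ht N
  have hchain := chain ht M (N - M)
  rw [show M + (N - M) = N from by omega] at hchain
  have hcast : ((M:ℝ) + ((N - M : ℕ):ℝ)) = (N:ℝ) := by
    rw [Nat.cast_sub hMN]; ring
  rw [hcast] at hchain
  rw [besselI_eq, besselI_eq]
  rw [Real.le_log_iff_exp_le (div_pos hJN hJM)]
  have h1 : Real.exp (-(((N:ℝ)*((N:ℝ)+1) - (M:ℝ)*((M:ℝ)+1))/(2*t))) ≤ J N t / J M t :=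
    (le_div_iff₀ hJM).mpr hchain
  refine le_trans (Real.exp_le_exp.mpr ?_) h1
  have h2t : (0:ℝ) < 2*t := by linarith
  rw [← neg_div, div_le_div_iff_of_pos_right h2t]
  have hNr : ((N:ℝ)) = ((n:ℤ):ℝ) := by exact_mod_cast hNZ
  have hdr : (0:ℝ) ≤ (d:ℤ) := by exact_mod_cast hd
  have hndr : ((d:ℤ):ℝ) ≤ 2*((n:ℤ):ℝ) := by exact_mod_cast hnd
  rcases le_or_gt d n with h | h
  · have hMz : (M:ℤ) = n - d := by rw [hMabs]; rw [abs_of_nonneg (by omega)]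
    have hMr : ((M:ℝ)) = ((n:ℤ):ℝ) - ((d:ℤ):ℝ) := by exact_mod_cast hMz
    have hdn : ((d:ℤ):ℝ) ≤ ((n:ℤ):ℝ) := by exact_mod_cast h
    rw [hNr, hMr]
    nlinarith
  · have hMz : (M:ℤ) = d - n := by rw [hMabs]; rw [abs_of_nonpos (by omega)]; ring
    have hMr : ((M:ℝ)) = ((d:ℤ):ℝ) - ((n:ℤ):ℝ) := by exact_mod_cast hMz
    rw [hNr, hMr]
    nlinarith
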